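/- Let F be the class of mechanisms φ^v for vectors v ∈ ℝ^n satisfying 0 ≤ v[k] ≤ 1/(n(n−1)) for all k, v[k] ≥ v[k+1] for all k ∈ {1,…,n−1}, and v[n] = 0. A mechanism φ^v ∈ F is Pareto-efficient in F — i.e., there is no vector u satisfying the same constraints such that φ^u dominates φ^v — if and only if v[1] = 1/(n(n−1)). -/

import Mathlib

open Finset

/-- A preference over `n` objects, encoded by its rank function:
`r a` is the (0-based) rank of object `a`; object `a` is strictly preferred to `b`
iff `r a < r b`.  The `k`-th ranked object (0-based) is `r.symm k`. -/
abbrev Pref (n : ℕ) := Fin n ≃ Fin n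

/-- The total probability that allocation `p` assigns to the upper contour set of `a`
(the objects weakly preferred to `a`) under preference `r`. -/
def upperSum {n : ℕ} (r : Pref n) (p : Fin n → ℝ) (a : Fin n) : ℝ :=
  ∑ o ∈ Finset.univ.filter (fun o => r o ≤ r a), p o

/-- First-order stochastic dominance of `p` over `q` with respect to preference `r`. -/
def StochDom {n : ℕ} (r : Pref n) (p q : Fin n → ℝ) : Prop :=
  ∀ a : Fin n, upperSum r q a ≤ upperSum r p a

/-- A random assignment: a doubly stochastic matrix. -/
def IsRandomAssignment {n : ℕ} (P : Matrix (Fin n) (Fin n) ℝ) : Prop :=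
  (∀ i a, 0 ≤ P i a) ∧ (∀ i, ∑ a, P i a = 1) ∧ (∀ a, ∑ i, P i a = 1)

/-- A mechanism maps every preference profile to a random assignment. -/
def IsMechanism {n : ℕ} (φ : (Fin n → Pref n) → Matrix (Fin n) (Fin n) ℝ) : Prop :=
  ∀ prof, IsRandomAssignment (φ prof)

/-- Strategy-proofness: no agent can ever benefit (in the stochastic dominance sense)
from misreporting her preference. -/
def StrategyProof {n : ℕ} (φ : (Fin n → Pref n) → Matrix (Fin n) (Fin n) ℝ) : Prop :=
  ∀ (prof : Fin n → Pref n) (i : Fin n) (r' : Pref n),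
    StochDom (prof i) (φ prof i) (φ (Function.update prof i r') i)

/-- Envy-freeness: each agent's allocation stochastically dominates every other
agent's allocation with respect to her own preference. -/
def EnvyFree {n : ℕ} (φ : (Fin n → Pref n) → Matrix (Fin n) (Fin n) ℝ) : Prop :=
  ∀ (prof : Fin n → Pref n) (i j : Fin n), StochDom (prof i) (φ prof i) (φ prof j)

/-- The pairwise exchange mechanism induced by a transfer function `f`. -/
noncomputable def phiF {n : ℕ} (f : Pref n → Pref n → Fin n → ℝ) (prof : Fin n → Pref n) :
    Matrix (Fin n) (Fin n) ℝ :=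
  fun i a => 1 / (n : ℝ) + ∑ j ∈ Finset.univ.erase i, f (prof i) (prof j) a

/-- The transfer function takes values in `[-1/n, 1/n]`. -/
def TransferBounded {n : ℕ} (f : Pref n → Pref n → Fin n → ℝ) : Prop :=
  ∀ r r' a, -(1 / (n : ℝ)) ≤ f r r' a ∧ f r r' a ≤ 1 / (n : ℝ)

/-- The linear mechanism `φ^v` associated with a vector `v`. -/
noncomputable def phiV {n : ℕ} (v : Fin n → ℝ) : (Fin n → Pref n) → Matrix (Fin n) (Fin n) ℝ :=
  phiF (fun r r' a => v (r a) - v (r' a))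

/-- The constraints on the vector `v` of a linear mechanism. -/
def ValidV {n : ℕ} (hn : 0 < n) (v : Fin n → ℝ) : Prop :=
  (∀ k, 0 ≤ v k ∧ v k ≤ 1 / ((n : ℝ) * ((n : ℝ) - 1))) ∧
  (∀ (k : ℕ) (h : k + 1 < n), v ⟨k + 1, h⟩ ≤ v ⟨k, Nat.lt_of_succ_lt h⟩) ∧
  v ⟨n - 1, Nat.sub_lt hn Nat.one_pos⟩ = 0

/-- `φ` weakly dominates `φ'`. -/
def WeaklyDominates {n : ℕ}
    (φ φ' : (Fin n → Pref n) → Matrix (Fin n) (Fin n) ℝ) : Prop :=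
  ∀ (prof : Fin n → Pref n) (i : Fin n), StochDom (prof i) (φ prof i) (φ' prof i)

/-- `φ` (strictly) dominates `φ'`. -/
def Dominates {n : ℕ}
    (φ φ' : (Fin n → Pref n) → Matrix (Fin n) (Fin n) ℝ) : Prop :=
  WeaklyDominates φ φ' ∧
    ∃ (prof : Fin n → Pref n) (i : Fin n) (a : Fin n),
      upperSum (prof i) (φ' prof i) a < upperSum (prof i) (φ prof i) a

section Aux

variable {n : ℕ}

/-- Reindexing a sum over an upper contour set by the rank function. -/
lemma sum_rank (r : Pref n) (c : Fin n) (g : Fin n → ℝ) :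
    ∑ o ∈ Finset.univ.filter (fun o => r o ≤ c), g (r o)
      = ∑ t ∈ Finset.univ.filter (fun t => t ≤ c), g t := by
  refine Finset.sum_equiv r (fun o => ?_) (fun o _ => rfl)
  simp

lemma card_rank (r : Pref n) (c : Fin n) :
    (Finset.univ.filter (fun o => r o ≤ c)).card
      = (Finset.univ.filter (fun t => t ≤ c)).card := by
  refine Finset.card_equiv r (fun o => ?_)
  simp

/-- The difference of upper contour sums of two linear mechanisms. -/
lemma diff_formula (u v : Fin n → ℝ) (prof : Fin n → Pref n) (i a : Fin n) :
    upperSum (prof i) (phiV u prof i) a - upperSum (prof i) (phiV v prof i) a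
      = ∑ j ∈ Finset.univ.erase i,
          ((∑ o ∈ Finset.univ.filter (fun o => prof i o ≤ prof i a),
              (u (prof i o) - v (prof i o)))
           - ∑ o ∈ Finset.univ.filter (fun o => prof i o ≤ prof i a),
              (u (prof j o) - v (prof j o))) := by
  unfold upperSum phiV phiF
  calc
    (∑ o ∈ Finset.univ.filter (fun o => prof i o ≤ prof i a),
        (1 / (n : ℝ) + ∑ j ∈ Finset.univ.erase i, (u (prof i o) - u (prof j o))))
      - ∑ o ∈ Finset.univ.filter (fun o => prof i o ≤ prof i a),
        (1 / (n : ℝ) + ∑ j ∈ Finset.univ.erase i, (v (prof i o) - v (prof j o)))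
      = ∑ o ∈ Finset.univ.filter (fun o => prof i o ≤ prof i a),
          ∑ j ∈ Finset.univ.erase i,
            ((u (prof i o) - v (prof i o)) - (u (prof j o) - v (prof j o))) := by
        rw [← Finset.sum_sub_distrib]
        refine Finset.sum_congr rfl (fun o _ => ?_)
        rw [add_sub_add_left_eq_sub, ← Finset.sum_sub_distrib]
        refine Finset.sum_congr rfl (fun j _ => by ring)
    _ = _ := by
        rw [Finset.sum_comm]
        refine Finset.sum_congr rfl (fun j _ => ?_)
        rw [Finset.sum_sub_distrib]

/-- Prefix sums of an antitone sequence majorize sums over arbitrary sets of the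
same cardinality. -/
lemma majorize (D : Fin n → ℝ) (hD : ∀ m s : Fin n, m ≤ s → D s ≤ D m)
    (c : Fin n) (T : Finset (Fin n))
    (hT : T.card = (Finset.univ.filter (fun t => t ≤ c)).card) :
    ∑ t ∈ T, D t ≤ ∑ t ∈ Finset.univ.filter (fun t => t ≤ c), D t := by
  set P := Finset.univ.filter (fun t : Fin n => t ≤ c) with hP
  have hc1 : (T \ P).card + (T ∩ P).card = T.card := Finset.card_sdiff_add_card_inter T P
  have hc2 : (P \ T).card + (P ∩ T).card = P.card := Finset.card_sdiff_add_card_inter P T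
  have hci : (T ∩ P).card = (P ∩ T).card := by rw [Finset.inter_comm]
  have hcc : (T \ P).card = (P \ T).card := by omega
  have h1 : ∑ t ∈ T \ P, D t ≤ (T \ P).card • D c := by
    apply Finset.sum_le_card_nsmul
    intro t ht
    rcases Finset.mem_sdiff.mp ht with ⟨_, htP⟩
    have hct : c ≤ t := le_of_not_ge (by simpa [hP] using htP)
    exact hD c t hct
  have h2 : (P \ T).card • D c ≤ ∑ t ∈ P \ T, D t := by
    apply Finset.card_nsmul_le_sum
    intro t ht
    rcases Finset.mem_sdiff.mp ht with ⟨htP, _⟩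
    exact hD t c (by simpa [hP] using htP)
  have e1 : ∑ t ∈ T ∩ P, D t + ∑ t ∈ T \ P, D t = ∑ t ∈ T, D t :=
    Finset.sum_inter_add_sum_sdiff T P D
  have e2 : ∑ t ∈ P ∩ T, D t + ∑ t ∈ P \ T, D t = ∑ t ∈ P, D t :=
    Finset.sum_inter_add_sum_sdiff P T D
  have e3 : ∑ t ∈ T ∩ P, D t = ∑ t ∈ P ∩ T, D t := by rw [Finset.inter_comm]
  rw [hcc] at h1
  have h3 : ∑ t ∈ T \ P, D t ≤ ∑ t ∈ P \ T, D t := le_trans h1 h2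
  linarith

/-- If the difference `u - v` is antitone then `φ^u` weakly dominates `φ^v`. -/
lemma weakDom_of_antitone (u v : Fin n → ℝ)
    (hD : ∀ m s : Fin n, m ≤ s → u s - v s ≤ u m - v m) :
    WeaklyDominates (phiV u) (phiV v) := by
  intro prof i a
  rw [← sub_nonneg]
  have hdf := diff_formula u v prof i a
  rw [hdf]
  apply Finset.sum_nonneg
  intro j _
  rw [sub_nonneg]
  have hinj : Function.Injective (prof j) := (prof j).injective
  have himg : ∑ o ∈ Finset.univ.filter (fun o => prof i o ≤ prof i a),
      (u (prof j o) - v (prof j o))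
      = ∑ t ∈ (Finset.univ.filter (fun o => prof i o ≤ prof i a)).image (prof j),
          (u t - v t) := by
    rw [Finset.sum_image (fun x _ y _ h => hinj h)]
  rw [himg, sum_rank (prof i) (prof i a) (fun t => u t - v t)]
  apply majorize (fun t => u t - v t) hD (prof i a)
  rw [Finset.card_image_of_injective _ hinj]
  exact card_rank (prof i) (prof i a)

/-- The key profile: agent 0 reports the identity, everyone else swaps `m` and `s`. -/
lemma swap_profile_diff [NeZero n] (u v : Fin n → ℝ) (m s : Fin n) (hms : m < s)
    (prof : Fin n → Pref n) (h0 : prof 0 = Equiv.refl (Fin n))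
    (hj : ∀ j : Fin n, j ≠ 0 → prof j = Equiv.swap m s) :
    upperSum (prof 0) (phiV u prof 0) m - upperSum (prof 0) (phiV v prof 0) m
      = ((n : ℝ) - 1) * ((u m - v m) - (u s - v s)) := by
  have hA : prof 0 m = m := by rw [h0]; rfl
  have hdf := diff_formula u v prof 0 m
  rw [hdf]
  have key : ∀ j ∈ Finset.univ.erase (0 : Fin n),
      ((∑ o ∈ Finset.univ.filter (fun o => prof 0 o ≤ prof 0 m),
          (u (prof 0 o) - v (prof 0 o)))
       - ∑ o ∈ Finset.univ.filter (fun o => prof 0 o ≤ prof 0 m),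
          (u (prof j o) - v (prof j o)))
      = (u m - v m) - (u s - v s) := by
    intro j hjmem
    have hjne : j ≠ 0 := (Finset.mem_erase.mp hjmem).1
    rw [h0, hj j hjne]
    simp only [Equiv.refl_apply]
    have hmem : m ∈ Finset.univ.filter (fun o : Fin n => o ≤ m) := by
      simp
    show ∑ o ∈ Finset.univ.filter (fun o : Fin n => o ≤ m), (u o - v o)
        - ∑ o ∈ Finset.univ.filter (fun o : Fin n => o ≤ m),
          (u (Equiv.swap m s o) - v (Equiv.swap m s o)) = (u m - v m) - (u s - v s)
    rw [← Finset.sum_erase_add _ _ hmem, ← Finset.sum_erase_add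
      (Finset.univ.filter (fun o : Fin n => o ≤ m))
      (fun o => u (Equiv.swap m s o) - v (Equiv.swap m s o)) hmem]
    have hswm : Equiv.swap m s m = s := Equiv.swap_apply_left m s
    have hrest : ∀ o ∈ (Finset.univ.filter (fun o : Fin n => o ≤ m)).erase m,
        u (Equiv.swap m s o) - v (Equiv.swap m s o) = u o - v o := by
      intro o ho
      rcases Finset.mem_erase.mp ho with ⟨hom, homem⟩
      have holes : o ≤ m := by simpa using homem
      have hos : o ≠ s := ne_of_lt (lt_of_le_of_lt holes hms)
      rw [Equiv.swap_apply_of_ne_of_ne hom hos]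
    rw [Finset.sum_congr rfl hrest, hswm]
    ring
  rw [Finset.sum_congr rfl key, Finset.sum_const]
  have hcard : (Finset.univ.erase (0 : Fin n)).card = n - 1 := by
    rw [Finset.card_erase_of_mem (Finset.mem_univ _), Finset.card_univ, Fintype.card_fin]
  rw [hcard, nsmul_eq_mul]
  have hn1 : 1 ≤ n := Nat.one_le_iff_ne_zero.mpr (NeZero.ne n)
  push_cast [Nat.cast_sub hn1]
  ring


/-- A linear mechanism `φ^v` is Pareto-efficient within the class of linear
mechanisms iff `v[1] = 1/(n(n-1))`. -/
theorem linear_pareto_efficient_iff (n : ℕ) (hn : 3 ≤ n)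
    (v : Fin n → ℝ) (hv : ValidV (by omega) v) :
    (¬ ∃ u : Fin n → ℝ, ValidV (by omega) u ∧ Dominates (phiV u) (phiV v)) ↔
      v ⟨0, by omega⟩ = 1 / ((n : ℝ) * ((n : ℝ) - 1)) := by
  haveI : NeZero n := ⟨by omega⟩
  have hnR : (3 : ℝ) ≤ (n : ℝ) := by exact_mod_cast hn
  set M : ℝ := 1 / ((n : ℝ) * ((n : ℝ) - 1)) with hMdef
  have hMpos : 0 < M := by
    apply div_pos one_pos
    nlinarith
  have hz0 : (⟨0, by omega⟩ : Fin n) = (0 : Fin n) := by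
    ext; simp
  set z0 : Fin n := ⟨0, by omega⟩ with hz0def
  set z1 : Fin n := ⟨1, by omega⟩ with hz1def
  set last : Fin n := ⟨n - 1, Nat.sub_lt (by omega) Nat.one_pos⟩ with hlastdef
  obtain ⟨hvb, hvmono, hvlast⟩ := hv
  constructor
  · -- Pareto efficiency implies v[0] = M
    intro hne
    by_contra hne0
    have hlt : v z0 < M := lt_of_le_of_ne (hvb z0).2 hne0
    apply hne
    obtain ⟨u, hudef⟩ : ∃ u : Fin n → ℝ, u = fun t => if t = z0 then M else v t := ⟨_, rfl⟩
    have hDz0 : u z0 - v z0 = M - v z0 := by simp [hudef]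
    have hDother : ∀ t : Fin n, t ≠ z0 → u t - v t = 0 := by
      intro t ht; simp [hudef, ht]
    have hanti : ∀ m s : Fin n, m ≤ s → u s - v s ≤ u m - v m := by
      intro m s hms
      by_cases hm : m = z0
      · subst hm
        by_cases hs : s = z0
        · subst hs; exact le_refl _
        · rw [hDother s hs, hDz0]; linarith
      · have hs : s ≠ z0 := by
          intro hcon
          apply hm
          subst hcon
          have : (m : ℕ) ≤ 0 := hms
          ext
          show (m : ℕ) = 0
          omega
        rw [hDother s hs, hDother m hm]
    refine ⟨u, ⟨?_, ?_, ?_⟩, ?_, ?_⟩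
    · intro k
      have hgoal : u k = if k = z0 then M else v k := by rw [hudef]
      by_cases hk : k = z0
      · rw [hgoal, if_pos hk]
        refine ⟨hMpos.le, ?_⟩
        rw [← hMdef]
      · rw [hgoal, if_neg hk]
        exact hvb k
    · intro k h
      have h1 : (⟨k + 1, h⟩ : Fin n) ≠ z0 := by
        intro hcon
        have : k + 1 = 0 := by
          simp only [hz0def, Fin.ext_iff] at hcon
          exact hcon
        omega
      by_cases hk : (⟨k, Nat.lt_of_succ_lt h⟩ : Fin n) = z0
      · simp only [hudef, hk, if_pos rfl, if_neg h1]
        exact (hvb _).2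
      · simp only [hudef, if_neg h1, if_neg hk]
        exact hvmono k h
    · have hne' : (⟨n - 1, Nat.sub_lt (by omega) Nat.one_pos⟩ : Fin n) ≠ z0 := by
        intro hcon
        have : n - 1 = 0 := by
          simpa [hz0def, Fin.ext_iff] using hcon
        omega
      simp only [hudef, if_neg hne']
      exact hvlast
    · exact weakDom_of_antitone u v hanti
    · obtain ⟨prof, hprofdef⟩ : ∃ prof : Fin n → Pref n,
          prof = fun j => if j = (0 : Fin n) then Equiv.refl (Fin n) else Equiv.swap z0 z1 :=
        ⟨_, rfl⟩
      refine ⟨prof, 0, z0, ?_⟩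
      rw [← sub_pos]
      have h01 : z0 < z1 := by
        simp [hz0def, hz1def, Fin.lt_def]
      have hz0eq : prof 0 = Equiv.refl (Fin n) := by simp [hprofdef]
      have hjeq : ∀ j : Fin n, j ≠ 0 → prof j = Equiv.swap z0 z1 := by
        intro j hjne; simp [hprofdef, hjne]
      have := swap_profile_diff u v z0 z1 h01 prof hz0eq hjeq
      rw [this]
      have hz1ne : z1 ≠ z0 := by
        simp [hz0def, hz1def, Fin.ext_iff]
      rw [hDz0, hDother z1 hz1ne]
      have : (0 : ℝ) < (n : ℝ) - 1 := by linarith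
      nlinarith
  · -- v[0] = M implies Pareto efficiency
    intro hvM
    rintro ⟨u, ⟨hub, humono, hulast⟩, hweak, hstrict⟩
    have hanti : ∀ m s : Fin n, m ≤ s → u s - v s ≤ u m - v m := by
      intro m s hms
      rcases eq_or_lt_of_le hms with rfl | hlt
      · exact le_refl _
      · obtain ⟨prof, hprofdef⟩ : ∃ prof : Fin n → Pref n,
            prof = fun j => if j = (0 : Fin n) then Equiv.refl (Fin n) else Equiv.swap m s :=
          ⟨_, rfl⟩
        have hz0eq : prof 0 = Equiv.refl (Fin n) := by simp [hprofdef]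
        have hjeq : ∀ j : Fin n, j ≠ 0 → prof j = Equiv.swap m s := by
          intro j hjne; simp [hprofdef, hjne]
        have hdiff := swap_profile_diff u v m s hlt prof hz0eq hjeq
        have hwd := hweak prof 0 m
        rw [← sub_nonneg] at hwd
        rw [hdiff] at hwd
        have hpos : (0 : ℝ) < (n : ℝ) - 1 := by linarith
        nlinarith
    have hzero : ∀ t : Fin n, u t = v t := by
      intro t
      have hb1 : z0 ≤ t := by
        simp [hz0def, Fin.le_def]
      have hb2 : t ≤ last := by
        have := t.isLt
        simp [hlastdef, Fin.le_def]
        omega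
      have h1 : u t - v t ≤ u z0 - v z0 := hanti z0 t hb1
      have h2 : u last - v last ≤ u t - v t := hanti t last hb2
      have hu0 : u z0 ≤ M := (hub z0).2
      have hv0 : v z0 = M := hvM
      have hul : u last = 0 := hulast
      have hvl : v last = 0 := hvlast
      have : u t - v t = 0 := by
        rw [hul, hvl] at h2
        rw [hv0] at h1
        linarith
      linarith
    have huv : u = v := funext hzero
    obtain ⟨prof, i, a, hltc⟩ := hstrict
    rw [huv] at hltc
    exact lt_irrefl _ hltc
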